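/- Let G be a connected graph whose complement has a connected component isomorphic to the star K_{1,n} for some n ≥ 2. Then no vertex of that component is a basis forced vertex of G. -/

import Mathlib

open SimpleGraph

def IsResolving {V : Type*} (G : SimpleGraph V) (R : Set V) : Prop :=
  ∀ x y : V, x ≠ y → ∃ r ∈ R, G.dist r x ≠ G.dist r y

noncomputable def metricDim {V : Type*} (G : SimpleGraph V) : ℕ :=
  sInf {n | ∃ R : Set V, IsResolving G R ∧ R.ncard = n}

def IsMetricBasis {V : Type*} (G : SimpleGraph V) (R : Set V) : Prop :=
  IsResolving G R ∧ R.ncard = metricDim G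

def IsBasisForced {V : Type*} (G : SimpleGraph V) (v : V) : Prop :=
  ∀ R : Set V, IsMetricBasis G R → v ∈ R

lemma metricDim_le_of_resolving {V : Type*} [Fintype V] {G : SimpleGraph V} {R : Set V}
    (h : IsResolving G R) : metricDim G ≤ R.ncard :=
  Nat.sInf_le ⟨R, h, rfl⟩

lemma exists_metric_basis {V : Type*} [Fintype V] {G : SimpleGraph V} (hG : G.Connected) :
    ∃ R : Set V, IsMetricBasis G R := by
  have huniv : IsResolving G (Set.univ : Set V) := by
    intro x y hxy
    refine ⟨x, trivial, ?_⟩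
    rw [SimpleGraph.dist_self]
    exact (hG.pos_dist_of_ne hxy).ne
  have hmem : metricDim G ∈ {n | ∃ R : Set V, IsResolving G R ∧ R.ncard = n} :=
    Nat.sInf_mem ⟨_, Set.univ, huniv, rfl⟩
  obtain ⟨R, h1, h2⟩ := hmem
  exact ⟨R, h1, h2⟩

lemma star_core {V : Type*} [Fintype V] (G : SimpleGraph V) (hG : G.Connected)
    (c : V) (L : Set V) (hcL : c ∉ L) (hL2 : 2 ≤ L.ncard)
    (hll : ∀ l ∈ L, ∀ l' ∈ L, l ≠ l' → G.Adj l l')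
    (hlc : ∀ l ∈ L, ¬ G.Adj l c)
    (hout : ∀ x, x ∉ insert c L → ∀ y ∈ insert c L, G.Adj x y) :
    ∀ v ∈ insert c L, ¬ IsBasisForced G v := by
  classical
  have hne_lc : ∀ l ∈ L, l ≠ c := fun l hl h => hcL (h ▸ hl)
  have hLne : L.Nonempty := Set.nonempty_of_ncard_ne_zero (by omega)
  -- there is a vertex outside `insert c L`
  have hex : ∃ u, u ∉ insert c L := by
    by_contra hcon
    push_neg at hcon
    obtain ⟨l, hl⟩ := hLne
    obtain ⟨w⟩ := hG.preconnected c l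
    cases w with
    | nil => exact hcL hl
    | cons h p =>
      refine (fun b (hadj : G.Adj c b) => ?_ : ∀ b, G.Adj c b → False) _ h
      rcases hcon b with hb | hb
      · exact G.irrefl (hb ▸ hadj)
      · exact hlc b hb hadj.symm
  obtain ⟨u, hu⟩ := hex
  -- adjacency of a leaf to everything except c and itself
  have adj_l : ∀ l ∈ L, ∀ x, x ≠ l → x ≠ c → G.Adj l x := by
    intro l hl x hxl hxc
    by_cases hx : x ∈ L
    · exact hll l hl x hx (fun h => hxl h.symm)
    · have hxA : x ∉ insert c L := by
        intro h
        rcases h with h | h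
        · exact hxc h
        · exact hx h
      exact (hout x hxA l (Set.mem_insert_iff.mpr (Or.inr hl))).symm
  -- distance facts
  have dpos : ∀ x y : V, x ≠ y → G.dist x y ≠ 0 := fun x y h => (hG.pos_dist_of_ne h).ne'
  have dl1 : ∀ l ∈ L, ∀ x, x ≠ l → x ≠ c → G.dist l x = 1 := by
    intro l hl x hxl hxc
    exact SimpleGraph.dist_eq_one_iff_adj.mpr (adj_l l hl x hxl hxc)
  have dl2 : ∀ l ∈ L, G.dist l c = 2 := by
    intro l hl
    have hadj_ul : G.Adj u l := hout u hu l (Set.mem_insert_iff.mpr (Or.inr hl))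
    have hadj_uc : G.Adj u c := hout u hu c (Set.mem_insert c L)
    have hle : G.dist l c ≤ 2 := by
      have h2 := SimpleGraph.dist_le
        (SimpleGraph.Walk.cons hadj_ul.symm (SimpleGraph.Walk.cons hadj_uc SimpleGraph.Walk.nil))
      simpa using h2
    have h0 : G.dist l c ≠ 0 := dpos l c (hne_lc l hl)
    have h1 : G.dist l c ≠ 1 := fun h => hlc l hl (SimpleGraph.dist_eq_one_iff_adj.mp h)
    omega
  have dle1 : ∀ l ∈ L, ∀ x, x ≠ c → G.dist l x ≤ 1 := by
    intro l hl x hxc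
    by_cases hxl : x = l
    · rw [hxl, SimpleGraph.dist_self]; exact Nat.zero_le 1
    · rw [dl1 l hl x hxl hxc]
  have dc1 : ∀ x, x ∉ insert c L → G.dist c x = 1 := by
    intro x hx
    have hxc : x ≠ c := fun h => hx (h ▸ Set.mem_insert c L)
    exact SimpleGraph.dist_eq_one_iff_adj.mpr (hout x hx c (Set.mem_insert c L)).symm
  -- any resolving set misses at most one leaf
  have hmiss : ∀ R : Set V, IsResolving G R → ∀ l ∈ L, ∀ l' ∈ L, l ≠ l' → l ∈ R ∨ l' ∈ R := by
    intro R hR l hl l' hl' hne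
    by_contra hcon
    push_neg at hcon
    obtain ⟨r, hrR, hrd⟩ := hR l l' hne
    have hrl : r ≠ l := fun e => hcon.1 (e ▸ hrR)
    have hrl' : r ≠ l' := fun e => hcon.2 (e ▸ hrR)
    apply hrd
    by_cases hrc : r = c
    · subst hrc
      rw [SimpleGraph.dist_comm, dl2 l hl, SimpleGraph.dist_comm (v := l'), dl2 l' hl']
    · rw [SimpleGraph.dist_comm, dl1 l hl r hrl hrc,
        SimpleGraph.dist_comm (v := l'), dl1 l' hl' r hrl' hrc]
  -- a resolver of a pair outside `insert c L` lies outside `insert c L`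
  have routA : ∀ x y : V, x ∉ insert c L → y ∉ insert c L →
      ∀ r, G.dist r x ≠ G.dist r y → r ∉ insert c L := by
    intro x y hx hy r hrd hrA
    apply hrd
    have hxc : x ≠ c := fun h => hx (h ▸ Set.mem_insert c L)
    have hyc : y ≠ c := fun h => hy (h ▸ Set.mem_insert c L)
    rcases hrA with rfl | hrL
    · rw [dc1 x hx, dc1 y hy]
    · have hxr : x ≠ r := fun h => hx (Set.mem_insert_iff.mpr (Or.inr (h ▸ hrL)))
      have hyr : y ≠ r := fun h => hy (Set.mem_insert_iff.mpr (Or.inr (h ▸ hrL)))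
      rw [dl1 r hrL x hxr hxc, dl1 r hrL y hyr hyc]
  -- a metric basis exists
  obtain ⟨R, hRres, hRcard⟩ := exists_metric_basis hG
  intro v hv hforced
  have hvR : v ∈ R := hforced R ⟨hRres, hRcard⟩
  have hRfin : R.Finite := Set.toFinite R
  rcases hv with hvc | hvL
  · -- v = c
    have hcv : c = v := hvc.symm
    subst hcv
    set S : Set V := (R \ insert c L) ∪ L with hSdef
    have hSres : IsResolving G S := by
      have key : ∀ a b : V, a ≠ b → a ∈ insert c L →
          ∃ r ∈ S, G.dist r a ≠ G.dist r b := by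
        intro a b hab ha
        rcases ha with rfl | haL
        · obtain ⟨l, hl⟩ := hLne
          refine ⟨l, Or.inr hl, ?_⟩
          rw [dl2 l hl]
          have := dle1 l hl b (fun h => hab h.symm)
          omega
        · refine ⟨a, Or.inr haL, ?_⟩
          rw [SimpleGraph.dist_self]
          exact fun h => dpos a b hab h.symm
      intro x y hxy
      by_cases hx : x ∈ insert c L
      · exact key x y hxy hx
      by_cases hy : y ∈ insert c L
      · obtain ⟨r, hr, hd⟩ := key y x (Ne.symm hxy) hy
        exact ⟨r, hr, hd.symm⟩
      · obtain ⟨r, hrR, hrd⟩ := hRres x y hxy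
        exact ⟨r, Or.inl ⟨hrR, routA x y hx hy r hrd⟩, hrd⟩
    -- cardinality bound
    have hcard : S.ncard ≤ R.ncard := by
      have hdisj : Disjoint (R \ insert c L) L :=
        Set.disjoint_sdiff_left.mono_right (Set.subset_insert c L)
      have hS : S.ncard = (R \ insert c L).ncard + L.ncard :=
        Set.ncard_union_eq hdisj
      have hR : (R ∩ insert c L).ncard + (R \ insert c L).ncard = R.ncard :=
        Set.ncard_inter_add_ncard_diff_eq_ncard R (insert c L)
      have hLR : (L ∩ R).ncard + (L \ R).ncard = L.ncard :=
        Set.ncard_inter_add_ncard_diff_eq_ncard L R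
      have hmiss1 : (L \ R).ncard ≤ 1 := by
        rw [Set.ncard_le_one_iff_eq]
        rcases Set.eq_empty_or_nonempty (L \ R) with h | ⟨a, ha⟩
        · exact Or.inl h
        · refine Or.inr ⟨a, ?_⟩
          ext b
          simp only [Set.mem_singleton_iff]
          constructor
          · intro hb
            by_contra hba
            rcases hmiss R hRres b hb.1 a ha.1 hba with h | h
            · exact hb.2 h
            · exact ha.2 h
          · rintro rfl; exact ha
      have hins : (insert c (L ∩ R)).ncard = (L ∩ R).ncard + 1 :=
        Set.ncard_insert_of_notMem (fun h => hcL h.1)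
      have hsub : (insert c (L ∩ R)).ncard ≤ (R ∩ insert c L).ncard := by
        apply Set.ncard_le_ncard _ (Set.toFinite _)
        rintro z (hz | hz)
        · simp only [hz]; exact ⟨hvR, Set.mem_insert c L⟩
        · exact ⟨hz.2, Or.inr hz.1⟩
      omega
    have hSbasis : IsMetricBasis G S := by
      refine ⟨hSres, le_antisymm ?_ (metricDim_le_of_resolving hSres)⟩
      rw [← hRcard]; exact hcard
    rcases hforced S hSbasis with ⟨_, hc⟩ | hc
    · exact hc (Set.mem_insert c L)
    · exact hcL hc
  · -- v ∈ L
    by_cases hLR : L ⊆ R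
    · -- all leaves are in R : swap v with c
      set T : Set V := insert c ((R \ insert c L) ∪ (L \ {v})) with hTdef
      obtain ⟨l', hl'⟩ : (L \ {v}).Nonempty := by
        apply Set.nonempty_of_ncard_ne_zero
        have := Set.ncard_diff_singleton_add_one hvL (Set.toFinite L)
        omega
      have hl'L : l' ∈ L := hl'.1
      have hl'v : l' ≠ v := by simpa using hl'.2
      have hTres : IsResolving G T := by
        have key : ∀ a b : V, a ≠ b → a ∈ insert c L →
            ∃ r ∈ T, G.dist r a ≠ G.dist r b := by
          intro a b hab ha
          rcases ha with rfl | haL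
          · refine ⟨l', Or.inr (Or.inr hl'), ?_⟩
            rw [dl2 l' hl'L]
            have := dle1 l' hl'L b (fun h => hab h.symm)
            omega
          · by_cases hav : a = v
            · subst hav
              by_cases hbc : b = c
              · subst hbc
                refine ⟨l', Or.inr (Or.inr hl'), ?_⟩
                rw [dl2 l' hl'L, dl1 l' hl'L a (fun h => hl'v h.symm) (hne_lc a haL)]
                omega
              by_cases hbL : b ∈ L
              · refine ⟨b, Or.inr (Or.inr ⟨hbL, by simpa using fun h => hab h.symm⟩), ?_⟩
                rw [SimpleGraph.dist_self, dl1 b hbL a hab (hne_lc a haL)]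
                omega
              · have hbA : b ∉ insert c L := by
                  intro h; rcases h with h | h
                  exacts [hbc h, hbL h]
                refine ⟨c, Set.mem_insert c _, ?_⟩
                rw [SimpleGraph.dist_comm, dl2 a haL, dc1 b hbA]
                omega
            · refine ⟨a, Or.inr (Or.inr ⟨haL, by simpa using hav⟩), ?_⟩
              rw [SimpleGraph.dist_self]
              exact fun h => dpos a b hab h.symm
        intro x y hxy
        by_cases hx : x ∈ insert c L
        · exact key x y hxy hx
        by_cases hy : y ∈ insert c L
        · obtain ⟨r, hr, hd⟩ := key y x (Ne.symm hxy) hy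
          exact ⟨r, hr, hd.symm⟩
        · obtain ⟨r, hrR, hrd⟩ := hRres x y hxy
          exact ⟨r, Or.inr (Or.inl ⟨hrR, routA x y hx hy r hrd⟩), hrd⟩
      have hcard : T.ncard ≤ R.ncard := by
        have hdisj : Disjoint (R \ insert c L) (L \ {v}) :=
          Set.disjoint_sdiff_left.mono_right
            ((Set.diff_subset).trans (Set.subset_insert c L))
        have hU : ((R \ insert c L) ∪ (L \ {v})).ncard
            = (R \ insert c L).ncard + (L \ {v}).ncard :=
          Set.ncard_union_eq hdisj
        have hcnot : c ∉ (R \ insert c L) ∪ (L \ {v}) := by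
          rintro (⟨_, hc⟩ | ⟨hc, _⟩)
          · exact hc (Set.mem_insert c L)
          · exact hcL hc
        have hT : T.ncard = ((R \ insert c L) ∪ (L \ {v})).ncard + 1 :=
          Set.ncard_insert_of_notMem hcnot
        have hLv : (L \ {v}).ncard + 1 = L.ncard :=
          Set.ncard_diff_singleton_add_one hvL (Set.toFinite L)
        have hR : (R ∩ insert c L).ncard + (R \ insert c L).ncard = R.ncard :=
          Set.ncard_inter_add_ncard_diff_eq_ncard R (insert c L)
        have hsub : L.ncard ≤ (R ∩ insert c L).ncard := by
          apply Set.ncard_le_ncard _ (Set.toFinite _)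
          exact fun z hz => ⟨hLR hz, Or.inr hz⟩
        omega
      have hTbasis : IsMetricBasis G T := by
        refine ⟨hTres, le_antisymm ?_ (metricDim_le_of_resolving hTres)⟩
        rw [← hRcard]; exact hcard
      rcases hforced T hTbasis with hc | (⟨_, hc⟩ | ⟨_, hc⟩)
      · exact hne_lc v hvL hc
      · exact hc (Or.inr hvL)
      · exact hc rfl
    · -- some leaf m is missing from R : swap v with m
      obtain ⟨m, hmL, hmR⟩ := Set.not_subset.mp hLR
      have hmv : m ≠ v := fun e => hmR (e ▸ hvR)
      set σ : Equiv.Perm V := Equiv.swap v m with hσdef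
      have hσc : σ c = c :=
        Equiv.swap_apply_of_ne_of_ne (fun h => hne_lc v hvL h.symm)
          (fun h => hne_lc m hmL h.symm)
      have dleaf : ∀ l ∈ L, ∀ x, G.dist l x = if x = l then 0 else if x = c then 2 else 1 := by
        intro l hl x
        by_cases h1 : x = l
        · simp [h1, SimpleGraph.dist_self]
        by_cases h2 : x = c
        · simp only [if_neg h1, if_pos h2]
          rw [h2, dl2 l hl]
        · simp only [if_neg h1, if_neg h2]
          exact dl1 l hl x h1 h2
      have hmem2 : ∀ x : V, (x = v ∨ x = m) → x ∈ L := by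
        rintro x (h | h) <;> simp only [h] <;> assumption
      have hσmem : ∀ x : V, (x = v ∨ x = m) → (σ x = v ∨ σ x = m) := by
        rintro x (h | h) <;> simp only [h]
        · exact Or.inr (Equiv.swap_apply_left v m)
        · exact Or.inl (Equiv.swap_apply_right v m)
      have hswap : ∀ x y : V, G.dist (σ x) (σ y) = G.dist x y := by
        have hc_iff : ∀ y : V, σ y = c ↔ y = c := by
          intro y
          constructor
          · intro h; have := σ.injective (h.trans hσc.symm); exact this
          · rintro rfl; exact hσc
        intro x y
        by_cases hx : x = v ∨ x = m
        · rw [dleaf (σ x) (hmem2 _ (hσmem x hx)) (σ y), dleaf x (hmem2 x hx) y]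
          rw [if_congr (σ.injective.eq_iff (a := y) (b := x)) rfl
            (if_congr (hc_iff y) rfl rfl)]
        · push_neg at hx
          rw [Equiv.swap_apply_of_ne_of_ne hx.1 hx.2]
          by_cases hy : y = v ∨ y = m
          · rw [SimpleGraph.dist_comm, SimpleGraph.dist_comm (u := x) (v := y)]
            rw [dleaf (σ y) (hmem2 _ (hσmem y hy)) x, dleaf y (hmem2 y hy) x]
            have h1 : (x = σ y) = False := by
              rcases hσmem y hy with h | h <;> rw [h] <;> simp [hx.1, hx.2]
            have h2 : (x = y) = False := by
              rcases hy with rfl | rfl <;> simp [hx.1, hx.2]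
            rw [h1, h2]
          · push_neg at hy
            rw [Equiv.swap_apply_of_ne_of_ne hy.1 hy.2]
      set S : Set V := insert m (R \ {v}) with hSdef
      have hSres : IsResolving G S := by
        intro x y hxy
        have hσxy : σ x ≠ σ y := fun h => hxy (σ.injective h)
        obtain ⟨r, hrR, hrd⟩ := hRres (σ x) (σ y) hσxy
        refine ⟨σ r, ?_, ?_⟩
        · by_cases hrv : r = v
          · subst hrv
            rw [Equiv.swap_apply_left]
            exact Set.mem_insert m _
          · have hrm : r ≠ m := fun e => hmR (e ▸ hrR)
            rw [Equiv.swap_apply_of_ne_of_ne hrv hrm]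
            exact Set.mem_insert_iff.mpr (Or.inr ⟨hrR, by simpa using hrv⟩)
        · have e1 : G.dist (σ r) x = G.dist r (σ x) := by
            rw [← hswap r (σ x), Equiv.swap_apply_self]
          have e2 : G.dist (σ r) y = G.dist r (σ y) := by
            rw [← hswap r (σ y), Equiv.swap_apply_self]
          rw [e1, e2]
          exact hrd
      have hcard : S.ncard = R.ncard := by
        have h1 : S.ncard = (R \ {v}).ncard + 1 :=
          Set.ncard_insert_of_notMem (fun h => hmR h.1)
        have h2 : (R \ {v}).ncard + 1 = R.ncard :=
          Set.ncard_diff_singleton_add_one hvR hRfin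
        omega
      have hSbasis : IsMetricBasis G S := ⟨hSres, by rw [hcard, hRcard]⟩
      rcases hforced S hSbasis with hc | ⟨_, hc⟩
      · exact hmv hc.symm
      · exact hc rfl

theorem stmt12 {V : Type*} [Fintype V] (G : SimpleGraph V) (hG : G.Connected)
    (C : Gᶜ.ConnectedComponent) (n : ℕ) (hn : 2 ≤ n)
    (hiso : Nonempty ((Gᶜ.induce C.supp) ≃g completeBipartiteGraph (Fin 1) (Fin n))) :
    ∀ v ∈ C.supp, ¬ IsBasisForced G v := by
  classical
  obtain ⟨φ⟩ := hiso
  set f : Fin 1 ⊕ Fin n → V := fun a => (φ.symm a : V) with hf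
  have hfinj : Function.Injective f := by
    intro a b h
    exact φ.symm.injective (Subtype.ext h)
  have hfmem : ∀ a, f a ∈ C.supp := fun a => (φ.symm a).2
  set c : V := f (Sum.inl 0) with hc
  set L : Set V := Set.range (fun j : Fin n => f (Sum.inr j)) with hL
  have hGadj : ∀ a b, Gᶜ.Adj (f a) (f b) ↔
      (completeBipartiteGraph (Fin 1) (Fin n)).Adj a b := by
    intro a b
    have h := φ.symm.map_adj_iff (v := a) (w := b)
    simpa [SimpleGraph.comap_adj] using h
  have hsupp : insert c L = C.supp := by
    ext x
    constructor
    · rintro (rfl | ⟨j, rfl⟩) <;> exact hfmem _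
    · intro hx
      have hx' : x = f (φ ⟨x, hx⟩) := by
        simp [hf]
      rcases h : φ ⟨x, hx⟩ with i | j
      · left
        rw [hx', h]
        have : i = 0 := Subsingleton.elim i 0
        rw [this]
      · right
        exact ⟨j, by rw [hx', h]⟩
  have hcL : c ∉ L := by
    rintro ⟨j, hj⟩
    exact Sum.inr_ne_inl (hfinj hj)
  have hL2 : 2 ≤ L.ncard := by
    have h1 : L = (fun j : Fin n => f (Sum.inr j)) '' Set.univ := by
      rw [Set.image_univ]
    have h2 : Function.Injective (fun j : Fin n => f (Sum.inr j)) :=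
      fun a b h => Sum.inr_injective (hfinj h)
    rw [h1, Set.ncard_image_of_injective _ h2, Set.ncard_univ, Nat.card_eq_fintype_card,
      Fintype.card_fin]
    exact hn
  have hll : ∀ l ∈ L, ∀ l' ∈ L, l ≠ l' → G.Adj l l' := by
    rintro l ⟨j, rfl⟩ l' ⟨k, rfl⟩ hne
    have hnadj : ¬ Gᶜ.Adj (f (Sum.inr j)) (f (Sum.inr k)) := by
      rw [hGadj]
      simp
    rw [SimpleGraph.compl_adj] at hnadj
    push_neg at hnadj
    exact hnadj hne
  have hlc : ∀ l ∈ L, ¬ G.Adj l c := by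
    rintro l ⟨j, rfl⟩ hadj
    have h : Gᶜ.Adj (f (Sum.inr j)) (f (Sum.inl 0)) := by
      rw [hGadj]
      simp
    rw [SimpleGraph.compl_adj] at h
    exact h.2 hadj
  have hout : ∀ x, x ∉ insert c L → ∀ y ∈ insert c L, G.Adj x y := by
    intro x hx y hy
    rw [hsupp] at hx hy
    have hnadj : ¬ Gᶜ.Adj x y := by
      intro h
      apply hx
      rw [SimpleGraph.ConnectedComponent.mem_supp_iff] at hy ⊢
      rw [← hy]
      exact SimpleGraph.ConnectedComponent.sound h.reachable
    have hxy : x ≠ y := fun h => hx (h ▸ hy)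
    by_contra hadj
    exact hnadj (SimpleGraph.compl_adj G x y |>.mpr ⟨hxy, hadj⟩)
  intro v hv
  exact star_core G hG c L hcL hL2 hll hlc hout v (by rw [hsupp]; exact hv)
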